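/- Kruskal's tensor-rank bound for matrix codes: let C ≤ F_q^{n×m} be a nonzero subspace of dimension k whose every nonzero element has rank at least d. If C is contained in the span of R rank-one matrices, then R ≥ k + d − 1. -/

import Mathlib

open Matrix

lemma aux_rank_add_le {K : Type*} [Field K] {n m : ℕ}
    (X Y : Matrix (Fin n) (Fin m) K) : (X + Y).rank ≤ X.rank + Y.rank := by
  rw [Matrix.rank, Matrix.rank, Matrix.rank, Matrix.mulVecLin_add]
  refine le_trans (Submodule.finrank_mono ?_) (Submodule.finrank_add_le_finrank_add_finrank _ _)
  rintro x ⟨v, rfl⟩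
  exact Submodule.add_mem_sup ⟨v, rfl⟩ ⟨v, rfl⟩

lemma aux_rank_smul_le {K : Type*} [Field K] {n m : ℕ}
    (c : K) (X : Matrix (Fin n) (Fin m) K) : (c • X).rank ≤ X.rank := by
  rw [Matrix.rank, Matrix.rank]
  refine Submodule.finrank_mono ?_
  rintro x ⟨v, rfl⟩
  exact ⟨c • v, by simp [Matrix.mulVecLin_apply, Matrix.mulVec_smul, Matrix.smul_mulVec]⟩

lemma aux_rank_sum_le {K : Type*} [Field K] {n m R : ℕ}
    (A : Fin R → Matrix (Fin n) (Fin m) K) (hA : ∀ i, (A i).rank = 1)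
    (c : Fin R → K) (s : Finset (Fin R)) :
    (∑ i ∈ s, c i • A i).rank ≤ s.card := by
  classical
  induction s using Finset.induction with
  | empty => simp
  | @insert a s hx ih =>
    rw [Finset.sum_insert hx, Finset.card_insert_of_notMem hx]
    refine le_trans (aux_rank_add_le _ _) ?_
    have h1 : (c a • A a).rank ≤ 1 := by
      refine le_trans (aux_rank_smul_le _ _) ?_
      rw [hA a]
    omega

/-- Kruskal's tensor-rank bound for matrix codes over a finite field `K = F_q`. -/
theorem stmt15 {K : Type*} [Field K] [Fintype K] {n m k d R : ℕ}
    (C : Submodule K (Matrix (Fin n) (Fin m) K)) (hC : C ≠ ⊥)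
    (hk : Module.finrank K C = k)
    (hd : ∀ X ∈ C, X ≠ 0 → d ≤ X.rank)
    (A : Fin R → Matrix (Fin n) (Fin m) K) (hA : ∀ i, (A i).rank = 1)
    (hspan : C ≤ Submodule.span K (Set.range A)) :
    k + d - 1 ≤ R := by
  classical
  -- the linear combination map
  set L : (Fin R → K) →ₗ[K] Matrix (Fin n) (Fin m) K :=
    Fintype.linearCombination K A with hL
  have hrange : LinearMap.range L = Submodule.span K (Set.range A) := by
    rw [hL, ← Finsupp.range_linearCombination]
    ext x
    constructor
    · rintro ⟨v, rfl⟩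
      exact ⟨(Finsupp.linearEquivFunOnFinite K K (Fin R)).symm v,
        Finsupp.linearCombination_eq_fintype_linearCombination_apply K A v⟩
    · rintro ⟨v, rfl⟩
      refine ⟨v, ?_⟩
      rw [← Finsupp.linearCombination_eq_fintype_linearCombination_apply K A v]
      simp
  have hCle : C ≤ LinearMap.range L := hrange ▸ hspan
  -- a linear section of L over C
  obtain ⟨g, hg⟩ := L.rangeRestrict.exists_rightInverse_of_surjective
    (LinearMap.range_eq_top.2 (LinearMap.surjective_rangeRestrict L))
  set σ : C →ₗ[K] (Fin R → K) := g.comp (Submodule.inclusion hCle) with hσ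
  have hLσ : ∀ x : C, L (σ x) = (x : Matrix (Fin n) (Fin m) K) := by
    intro x
    have := congrArg (fun f => (f (Submodule.inclusion hCle x) : Matrix (Fin n) (Fin m) K))
      hg
    simpa [σ, LinearMap.rangeRestrict] using this
  have hσinj : Function.Injective σ := by
    intro x y hxy
    have : (x : Matrix (Fin n) (Fin m) K) = y := by
      rw [← hLσ x, ← hLσ y, hxy]
    exact Subtype.ext this
  -- weight bound: nonzero codewords have ≥ d nonzero coordinates
  have hweight : ∀ x : C, x ≠ 0 →
      d ≤ (Finset.univ.filter (fun i => σ x i ≠ 0)).card := by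
    intro x hx
    have hx0 : (x : Matrix (Fin n) (Fin m) K) ≠ 0 := by
      simpa [Submodule.coe_eq_zero] using hx
    have hdx : d ≤ ((x : Matrix (Fin n) (Fin m) K)).rank := hd x x.2 hx0
    have hsum : (x : Matrix (Fin n) (Fin m) K)
        = ∑ i ∈ Finset.univ.filter (fun i => σ x i ≠ 0), σ x i • A i := by
      rw [← hLσ x, hL, Fintype.linearCombination_apply]
      refine (Finset.sum_subset (Finset.filter_subset _ _) ?_).symm
      intro i _ hi
      simp only [Finset.mem_filter, Finset.mem_univ, true_and, not_not] at hi
      simp [hi]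
    calc d ≤ ((x : Matrix (Fin n) (Fin m) K)).rank := hdx
      _ ≤ _ := by rw [hsum]; exact aux_rank_sum_le A hA (σ x) _
  have hk1 : 1 ≤ k := by
    rw [← hk]
    have : Nontrivial C := (Submodule.nontrivial_iff_ne_bot).2 hC
    exact Module.finrank_pos
  rcases Nat.eq_zero_or_pos d with hd0 | hd1
  · -- d = 0 : just need k ≤ R
    have : k ≤ R := by
      rw [← hk, ← Module.finrank_fin_fun (R := K) (n := R)]
      exact LinearMap.finrank_le_finrank_of_injective hσinj
    omega
  · -- puncture the last d - 1 coordinates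
    set t : ℕ := R - (d - 1) with ht
    have htR : t ≤ R := Nat.sub_le _ _
    set π : (Fin R → K) →ₗ[K] (Fin t → K) :=
      LinearMap.funLeft K K (Fin.castLE htR) with hπ
    have hinj : Function.Injective (π.comp σ) := by
      rw [← LinearMap.ker_eq_bot]
      rw [Submodule.eq_bot_iff]
      intro x hx
      by_contra hx0
      have hzero : ∀ j : Fin t, σ x (Fin.castLE htR j) = 0 := by
        intro j
        have := congrFun (show π (σ x) = 0 from hx) j
        simpa [π, LinearMap.funLeft] using this
      -- support is contained in the high coordinates
      have hsub : (Finset.univ.filter (fun i => σ x i ≠ 0)).card ≤ d - 1 := by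
        have hhi : ∀ a : Fin R, σ x a ≠ 0 → t ≤ (a : ℕ) := by
          intro a hane
          by_contra hlt
          push_neg at hlt
          have : Fin.castLE htR ⟨(a : ℕ), hlt⟩ = a := rfl
          exact hane (this ▸ hzero ⟨(a : ℕ), hlt⟩)
        have hcard : (Finset.univ.filter (fun i => σ x i ≠ 0)).card ≤ (Finset.Ico t R).card := by
          refine Finset.card_le_card_of_injOn (fun i => (i : ℕ)) ?_ ?_
          · intro a ha
            have := (Finset.mem_filter.1 ha).2
            exact Finset.mem_Ico.2 ⟨hhi a this, a.isLt⟩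
          · intro a _ b _ hab
            exact Fin.ext hab
        rw [Nat.card_Ico] at hcard
        omega
      exact absurd (hweight x hx0) (by omega)
    have hkt : k ≤ t := by
      rw [← hk, ← Module.finrank_fin_fun (R := K) (n := t)]
      exact LinearMap.finrank_le_finrank_of_injective hinj
    omega
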